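/- Let (I, ∨) be a join semilattice with least element ⊥, and let (A_p, ≤_p, ·_p, \_p, /_p, 1_p) for p ∈ I be a family of residuated posets. Let Φ = {φ_{pq} : A_p → A_q : p ≤ q} and Ψ = {ψ_{pq} : A_p → A_q : p ≤ q} be two semilattice directed systems of monotone maps such that each φ_{pq} is a monoid homomorphism, ψ_{pq}(a \_p b) = φ_{pq}(a) \_q ψ_{pq}(b) and ψ_{pq}(a /_p b) = ψ_{pq}(a) /_q φ_{pq}(b) for all a, b ∈ A_p, and the pair (Φ, Ψ) satisfies (O1)–(O3). Define on the disjoint union S = Σ_{p ∈ I} A_p: the order a ≤ b iff φ_{ps}(a) ≤_s ψ_{qs}(b) where a ∈ A_p, b ∈ A_q, s = p ∨ q; the product a·b = φ_{ps}(a) ·_s φ_{qs}(b); the unit 1 = 1_⊥ ∈ A_⊥; and the residuals a\b = φ_{ps}(a) \_s ψ_{qs}(b) and a/b = ψ_{ps}(a) /_s φ_{qs}(b). Then (S, ≤, ·, \, /, 1) is a residuated poset: ≤ is a partial order, (S, ·, 1) is a monoid, and a·b ≤ c ⟺ a ≤ c/b ⟺ b ≤ a\c for all a, b, c ∈ S.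 -/

import Mathlib

/-- A residuated poset: a partially ordered monoid with residuals `ld` (`x \ z`)
and `rd` (`z / y`) satisfying the residuation law. -/
class ResiduatedPoset (α : Type*) extends PartialOrder α, Monoid α where
  ld : α → α → α
  rd : α → α → α
  mul_le_iff_le_rd : ∀ x y z : α, x * y ≤ z ↔ x ≤ rd z y
  mul_le_iff_le_ld : ∀ x y z : α, x * y ≤ z ↔ y ≤ ld x z

open ResiduatedPoset

theorem stmt_19 {I : Type*} [SemilatticeSup I] [OrderBot I]
    {A : I → Type*} [∀ p, ResiduatedPoset (A p)]
    (φ ψ : ∀ {p q : I}, p ≤ q → A p → A q)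
    (hφmono : ∀ {p q : I} (h : p ≤ q), Monotone (φ h))
    (hψmono : ∀ {p q : I} (h : p ≤ q), Monotone (ψ h))
    (hφid : ∀ (p : I) (a : A p), φ (le_refl p) a = a)
    (hψid : ∀ (p : I) (a : A p), ψ (le_refl p) a = a)
    (hφcomp : ∀ {p q r : I} (hpq : p ≤ q) (hqr : q ≤ r) (a : A p),
      φ hqr (φ hpq a) = φ (hpq.trans hqr) a)
    (hψcomp : ∀ {p q r : I} (hpq : p ≤ q) (hqr : q ≤ r) (a : A p),
      ψ hqr (ψ hpq a) = ψ (hpq.trans hqr) a)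
    -- each φ_{pq} is a monoid homomorphism
    (hφone : ∀ {p q : I} (h : p ≤ q), φ h (1 : A p) = 1)
    (hφmul : ∀ {p q : I} (h : p ≤ q) (a b : A p), φ h (a * b) = φ h a * φ h b)
    -- ψ interacts with the residuals
    (hψld : ∀ {p q : I} (h : p ≤ q) (a b : A p), ψ h (ld a b) = ld (φ h a) (ψ h b))
    (hψrd : ∀ {p q : I} (h : p ≤ q) (a b : A p), ψ h (rd a b) = rd (ψ h a) (φ h b))
    -- (O1), (O2), (O3)
    (hO1 : ∀ {p q : I} (h : p < q) (a : A p), ψ h.le a < φ h.le a)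
    (hO2 : ∀ {p q r : I} (hpq : p ≤ q) (hpr : p ≤ r) (a : A p),
      φ (le_sup_left : q ≤ q ⊔ r) (ψ hpq a) ≤ ψ (le_sup_right : r ≤ q ⊔ r) (φ hpr a))
    (hO3 : ∀ {p q : I} (h : p ≤ q) (a b : A p), φ h a ≤ ψ h b → a ≤ b)
    -- the order, product, unit and residuals on the disjoint union S = Σ p, A p
    (rel : (Σ p, A p) → (Σ p, A p) → Prop)
    (hrel : ∀ x y : Σ p, A p,
      rel x y ↔ φ (le_sup_left : x.1 ≤ x.1 ⊔ y.1) x.2 ≤ ψ (le_sup_right : y.1 ≤ x.1 ⊔ y.1) y.2)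
    (smul : (Σ p, A p) → (Σ p, A p) → Σ p, A p)
    (hsmul : ∀ x y : Σ p, A p, smul x y =
      ⟨x.1 ⊔ y.1, φ (le_sup_left : x.1 ≤ x.1 ⊔ y.1) x.2 * φ (le_sup_right : y.1 ≤ x.1 ⊔ y.1) y.2⟩)
    (sone : Σ p, A p) (hsone : sone = ⟨⊥, (1 : A ⊥)⟩)
    (sld : (Σ p, A p) → (Σ p, A p) → Σ p, A p)
    (hsld : ∀ x y : Σ p, A p, sld x y =
      ⟨x.1 ⊔ y.1, ld (φ (le_sup_left : x.1 ≤ x.1 ⊔ y.1) x.2) (ψ (le_sup_right : y.1 ≤ x.1 ⊔ y.1) y.2)⟩)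
    (srd : (Σ p, A p) → (Σ p, A p) → Σ p, A p)
    (hsrd : ∀ x y : Σ p, A p, srd x y =
      ⟨x.1 ⊔ y.1, rd (ψ (le_sup_left : x.1 ≤ x.1 ⊔ y.1) x.2) (φ (le_sup_right : y.1 ≤ x.1 ⊔ y.1) y.2)⟩) :
    -- ≤ is a partial order
    (Reflexive rel ∧ Transitive rel ∧ (∀ x y : Σ p, A p, rel x y → rel y x → x = y)) ∧
    -- (S, ·, 1) is a monoid
    ((∀ x y z : Σ p, A p, smul (smul x y) z = smul x (smul y z)) ∧
     (∀ x : Σ p, A p, smul sone x = x) ∧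
     (∀ x : Σ p, A p, smul x sone = x)) ∧
    -- residuation law
    (∀ x y z : Σ p, A p,
      (rel (smul x y) z ↔ rel x (srd z y)) ∧ (rel (smul x y) z ↔ rel y (sld x z))) := by

  -- `φ` and `ψ` agree when the indices are equal
  have hφψeq : ∀ {p q : I} (h : p ≤ q), p = q → ∀ a : A p, φ h a = ψ h a := by
    intro p q h e a; subst e
    exact (hφid p a).trans (hψid p a).symm
  -- equality of sigma pairs with equal indices
  have sig_eq : ∀ {s t : I} (e : s = t) (a : A s) (b : A t), φ e.le a = b →
      (⟨s, a⟩ : Σ p, A p) = ⟨t, b⟩ := by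
    intro s t e a b h; subst e
    exact congrArg (Sigma.mk s) ((hφid s a).symm.trans h)
  have genrd : ∀ {t t' : I}, t = t' → ∀ {p q r : I} (hp : p ≤ t) (hq : q ≤ t) (hr : r ≤ t)
      (hp' : p ≤ t') (hq' : q ≤ t') (hr' : r ≤ t') (a : A p) (b : A q) (c : A r),
      (φ hp a ≤ rd (ψ hr c) (φ hq b) ↔ φ hp' a ≤ rd (ψ hr' c) (φ hq' b)) := by
    intro t t' e; subst e; intros; exact Iff.rfl
  have genld : ∀ {t t' : I}, t = t' → ∀ {p q r : I} (hp : p ≤ t) (hq : q ≤ t) (hr : r ≤ t)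
      (hp' : p ≤ t') (hq' : q ≤ t') (hr' : r ≤ t') (a : A p) (b : A q) (c : A r),
      (φ hq b ≤ ld (φ hp a) (ψ hr c) ↔ φ hq' b ≤ ld (φ hp' a) (ψ hr' c)) := by
    intro t t' e; subst e; intros; exact Iff.rfl
  refine ⟨⟨?_, ?_, ?_⟩, ⟨?_, ?_, ?_⟩, ?_⟩
  · -- reflexive
    intro x
    obtain ⟨p, a⟩ := x
    rw [hrel]
    rw [hφψeq (le_sup_left : p ≤ p ⊔ p) (sup_idem p).symm a]
  · -- transitive
    intro x y z hxy hyz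
    obtain ⟨p, a⟩ := x; obtain ⟨q, b⟩ := y; obtain ⟨r, c⟩ := z
    rw [hrel] at hxy hyz ⊢
    refine hO3 (sup_le (le_sup_left.trans le_sup_left : p ≤ (p ⊔ q) ⊔ (q ⊔ r))
      (le_sup_right.trans le_sup_right) : p ⊔ r ≤ (p ⊔ q) ⊔ (q ⊔ r)) _ _ ?_
    rw [hφcomp, hψcomp]
    have c1 : φ ((le_sup_left : p ≤ p ⊔ q).trans (le_sup_left : p ⊔ q ≤ (p ⊔ q) ⊔ (q ⊔ r))) a ≤
        φ (le_sup_left : p ⊔ q ≤ (p ⊔ q) ⊔ (q ⊔ r)) (ψ le_sup_right b) := by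
      rw [← hφcomp (le_sup_left : p ≤ p ⊔ q)]
      exact hφmono le_sup_left hxy
    have c2 := hO2 (le_sup_right : q ≤ p ⊔ q) (le_sup_left : q ≤ q ⊔ r) b
    have c3 := hψmono (le_sup_right : q ⊔ r ≤ (p ⊔ q) ⊔ (q ⊔ r)) hyz
    rw [hψcomp] at c3
    exact c1.trans (c2.trans c3)
  · -- antisymmetric
    intro x y hxy hyx
    obtain ⟨p, a⟩ := x; obtain ⟨q, b⟩ := y
    rw [hrel] at hxy hyx
    have key : ∀ {u v : I} (a' : A u) (b' : A v)
        (h1 : φ (le_sup_left : u ≤ u ⊔ v) a' ≤ ψ le_sup_right b')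
        (h2 : φ (le_sup_left : v ≤ v ⊔ u) b' ≤ ψ le_sup_right a'), v ≤ u := by
      intro u v a' b' h1 h2
      set t := (u ⊔ v) ⊔ (v ⊔ u) with ht
      have s1 : φ ((le_sup_left : u ≤ u ⊔ v).trans (le_sup_left : u ⊔ v ≤ t)) a' ≤
          φ (le_sup_left : u ⊔ v ≤ t) (ψ le_sup_right b') := by
        rw [← hφcomp (le_sup_left : u ≤ u ⊔ v)]; exact hφmono le_sup_left h1
      have s2 := hO2 (le_sup_right : v ≤ u ⊔ v) (le_sup_left : v ≤ v ⊔ u) b'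
      have s3 := hψmono (le_sup_right : v ⊔ u ≤ t) h2
      rw [hψcomp] at s3
      have chain : φ ((le_sup_left : u ≤ u ⊔ v).trans (le_sup_left : u ⊔ v ≤ t)) a' ≤
          ψ ((le_sup_right : u ≤ v ⊔ u).trans (le_sup_right : v ⊔ u ≤ t)) a' :=
        s1.trans (s2.trans s3)
      have hut : u ≤ t := le_sup_left.trans le_sup_left
      have : ¬ u < t := by
        intro hlt
        exact absurd (lt_of_le_of_lt chain (hO1 hlt a')) (lt_irrefl _)
      have hut' : u = t := ((lt_or_eq_of_le hut).resolve_left this)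
      calc v ≤ t := le_sup_left.trans le_sup_right
        _ = u := hut'.symm
    have hqp : q ≤ p := key a b hxy hyx
    have hpq : p ≤ q := key b a hyx hxy
    have e : q = p := le_antisymm hqp hpq
    subst e
    exact congrArg (Sigma.mk _) (le_antisymm (hO3 le_sup_left _ _ hxy) (hO3 le_sup_left _ _ hyx))
  · -- associativity
    intro x y z
    obtain ⟨p, a⟩ := x; obtain ⟨q, b⟩ := y; obtain ⟨r, c⟩ := z
    simp only [hsmul]
    refine sig_eq (sup_assoc p q r) _ _ ?_
    simp only [hφmul, hφcomp, mul_assoc]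
  · -- left unit
    intro x
    obtain ⟨p, a⟩ := x
    rw [hsone]
    simp only [hsmul]
    refine sig_eq (bot_sup_eq p) _ _ ?_
    simp only [hφmul, hφone, hφcomp, one_mul]
    exact hφid p a
  · -- right unit
    intro x
    obtain ⟨p, a⟩ := x
    rw [hsone]
    simp only [hsmul]
    refine sig_eq (sup_bot_eq p) _ _ ?_
    simp only [hφmul, hφone, hφcomp, mul_one]
    exact hφid p a
  · -- residuation
    intro x y z
    obtain ⟨p, a⟩ := x; obtain ⟨q, b⟩ := y; obtain ⟨r, c⟩ := z
    constructor
    · simp only [hrel, hsmul, hsrd]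
      simp only [hφmul, hφcomp, hψcomp, hψrd]
      rw [mul_le_iff_le_rd]
      exact genrd (by rw [sup_assoc, sup_comm q r]) _ _ _ _ _ _ _ _ _
    · simp only [hrel, hsmul, hsld]
      simp only [hφmul, hφcomp, hψcomp, hψld]
      rw [mul_le_iff_le_ld]
      exact genld (by rw [sup_comm p q, sup_assoc]) _ _ _ _ _ _ _ _ _
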